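/- Let X be a locally compact Hausdorff space, Δ ⊆ X an open subset, φ : Δ → X a continuous proper map, and let α : C₀(X) → C₀(X) be the *-homomorphism given by α(a)(x) = a(φ(x)) for x ∈ Δ and α(a)(x) = 0 for x ∉ Δ. Then: (1) ker α is a complemented ideal of C₀(X), i.e. ker α + (ker α)^⊥ = C₀(X), if and only if φ(Δ) is open in X; (2) the system (C₀(X), α) is reversible — i.e. ker α is complemented and the range α(C₀(X)) is a hereditary C*-subalgebra of C₀(X) — if and only if φ(Δ) is open in X and φ is a homeomorphism of Δ onto φ(Δ). -/

import Mathlib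

open scoped ZeroAtInfty Classical
open Set Filter Topology

lemma exists_c0_one_zero {X : Type*} [TopologicalSpace X] [LocallyCompactSpace X] [T2Space X]
    {Y : Set X} (hY : IsClosed Y) {x : X} (hx : x ∉ Y) :
    ∃ b : C₀(X, ℂ), b x = 1 ∧ ∀ y ∈ Y, b y = 0 := by
  obtain ⟨f, hf1, hf0, hfc, -⟩ :=
    exists_continuous_one_zero_of_isCompact isCompact_singleton hY
      (Set.disjoint_singleton_left.mpr hx)
  refine ⟨⟨⟨fun z => (f z : ℂ), Complex.continuous_ofReal.comp f.continuous⟩, ?_⟩, ?_, ?_⟩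
  · exact (hfc.comp_left (g := (Complex.ofReal ·)) Complex.ofReal_zero).is_zero_at_infty
  · simp [hf1 (Set.mem_singleton x)]
  · intro y hy
    simp [hf0 hy]

lemma clopen_indicator {X : Type*} [TopologicalSpace X] {Y : Set X} (hYo : IsOpen Y)
    (hYc : IsClosed Y) (a : C₀(X, ℂ)) :
    ∃ c : C₀(X, ℂ), (∀ x ∈ Y, c x = a x) ∧ ∀ x ∉ Y, c x = 0 := by
  have hfr : frontier Y = ∅ := IsClopen.frontier_eq ⟨hYc, hYo⟩
  refine ⟨⟨⟨fun x => if x ∈ Y then a x else 0, ?_⟩, ?_⟩, ?_, ?_⟩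
  · refine Continuous.if (fun z hz => ?_) (map_continuous a) continuous_const
    rw [show {x | x ∈ Y} = Y from rfl, hfr] at hz
    exact absurd hz (Set.notMem_empty z)
  · refine squeeze_zero_norm (a := fun x => ‖a x‖) (fun x => ?_) ?_
    · by_cases hx : x ∈ Y <;> simp [hx]
    · simpa using (zero_at_infty a).norm
  · intro x hx; simp [hx]
  · intro x hx; simp [hx]

theorem stmt17 {X : Type*} [TopologicalSpace X] [LocallyCompactSpace X] [T2Space X]
    (Δ : Set X) (hΔ : IsOpen Δ) (φ : Δ → X) (hφc : Continuous φ)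
    (hφp : ∀ K : Set X, IsCompact K → IsCompact (φ ⁻¹' K))
    (α : C₀(X, ℂ) →⋆ₙₐ[ℂ] C₀(X, ℂ))
    (hα : ∀ (a : C₀(X, ℂ)) (x : X),
      α a x = if h : x ∈ Δ then a (φ ⟨x, h⟩) else 0) :
    -- (1) complemented kernel iff `φ(Δ)` open
    ((∀ a : C₀(X, ℂ), ∃ k c : C₀(X, ℂ), α k = 0 ∧
        (∀ b : C₀(X, ℂ), α b = 0 → c * b = 0) ∧ a = k + c) ↔
      IsOpen (Set.range φ)) ∧
    -- (2) reversibility iff `φ(Δ)` open and `φ : Δ → φ(Δ)` a homeomorphism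
    (((∀ a : C₀(X, ℂ), ∃ k c : C₀(X, ℂ), α k = 0 ∧
        (∀ b : C₀(X, ℂ), α b = 0 → c * b = 0) ∧ a = k + c) ∧
      (∀ u ∈ Set.range ⇑α, ∀ u' ∈ Set.range ⇑α, ∀ x : C₀(X, ℂ),
        u * x * u' ∈ Set.range ⇑α)) ↔
      (IsOpen (Set.range φ) ∧
        ∃ e : Δ ≃ₜ Set.range φ, ∀ x : Δ, (e x : X) = φ x)) := by
  set Y := Set.range φ with hYdef
  have hprop : IsProperMap φ := isProperMap_iff_isCompact_preimage.mpr
    ⟨hφc, fun K hK => hφp K hK⟩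
  have hYcl : IsClosed Y := hprop.isClosed_range
  have hval : ∀ (a : C₀(X, ℂ)) (t : Δ), α a (t : X) = a (φ t) := fun a t => by
    rw [hα a t, dif_pos t.2]
  -- kernel characterization
  have hker : ∀ a : C₀(X, ℂ), α a = 0 ↔ ∀ y ∈ Y, a y = 0 := by
    intro a
    constructor
    · rintro h y ⟨t, rfl⟩
      have h2 := hval a t
      rw [h] at h2
      simpa using h2.symm
    · intro h
      ext z
      rw [hα]
      split
      · rename_i hz
        simpa using h _ (Set.mem_range_self ⟨z, hz⟩)
      · simp
  -- annihilator characterization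
  have hann : ∀ c : C₀(X, ℂ), (∀ b, α b = 0 → c * b = 0) ↔ ∀ x ∉ Y, c x = 0 := by
    intro c
    constructor
    · intro h x hx
      obtain ⟨b, hb1, hb0⟩ := exists_c0_one_zero hYcl hx
      have hbk : α b = 0 := (hker b).mpr hb0
      have h2 := congrArg (fun g : C₀(X, ℂ) => g x) (h b hbk)
      simpa [hb1] using h2
    · intro h b hb
      ext z
      by_cases hz : z ∈ Y
      · simp [(hker b).mp hb z hz]
      · simp [h z hz]
  -- part (1)
  have part1 : (∀ a : C₀(X, ℂ), ∃ k c : C₀(X, ℂ), α k = 0 ∧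
      (∀ b : C₀(X, ℂ), α b = 0 → c * b = 0) ∧ a = k + c) ↔ IsOpen Y := by
    constructor
    · intro h
      rw [isOpen_iff_mem_nhds]
      intro y hy
      obtain ⟨a, ha1, -⟩ := exists_c0_one_zero isClosed_empty (Set.notMem_empty y)
      obtain ⟨k, c, hk, hc, hkc⟩ := h a
      have hky : k y = 0 := (hker k).mp hk y hy
      have hcy : c y ≠ 0 := by
        have : a y = k y + c y := by rw [hkc]; simp
        rw [ha1, hky, zero_add] at this
        rw [← this]; exact one_ne_zero
      have hsub : (⇑c) ⁻¹' {0}ᶜ ⊆ Y := by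
        intro x hx
        by_contra hxY
        exact hx ((hann c).mp hc x hxY)
      exact mem_nhds_iff.mpr ⟨(⇑c) ⁻¹' {0}ᶜ, hsub,
        (isOpen_compl_singleton).preimage (map_continuous c), hcy⟩
    · intro hYo a
      obtain ⟨c, hc1, hc2⟩ := clopen_indicator hYo hYcl a
      refine ⟨a - c, c, ?_, (hann c).mpr hc2, by abel⟩
      refine (hker (a - c)).mpr fun y hy => ?_
      simp [hc1 y hy]
  refine ⟨part1, ?_⟩
  constructor
  · rintro ⟨hcomp, hher⟩
    have hYo := part1.mp hcomp
    refine ⟨hYo, ?_⟩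
    have hinj : Function.Injective φ := by
      intro t₁ t₂ hts
      by_contra hne
      have hcne : (t₁ : X) ∉ ({(t₂ : X)} : Set X) := by
        simpa using fun h => hne (Subtype.ext h)
      obtain ⟨a, ha1, -⟩ := exists_c0_one_zero isClosed_empty (Set.notMem_empty (φ t₁))
      obtain ⟨x, hx1, hx0⟩ := exists_c0_one_zero isClosed_singleton hcne
      obtain ⟨b, hb⟩ := hher (α a) ⟨a, rfl⟩ (α a) ⟨a, rfl⟩ x
      have e1 : b (φ t₁) = 1 := by
        have := congrArg (fun g : C₀(X, ℂ) => g (t₁ : X)) hb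
        simpa [hval, ha1, hx1] using this
      have e2 : b (φ t₂) = 0 := by
        have := congrArg (fun g : C₀(X, ℂ) => g (t₂ : X)) hb
        simpa [hval, hx0 _ rfl] using this
      rw [hts, e2] at e1
      exact zero_ne_one e1
    have hemb : IsEmbedding φ :=
      (IsClosedEmbedding.of_continuous_injective_isClosedMap hφc hinj
        hprop.isClosedMap).toIsEmbedding
    exact ⟨hemb.toHomeomorph, fun t => rfl⟩
  · rintro ⟨hYo, e, he⟩
    refine ⟨part1.mpr hYo, ?_⟩
    rintro u ⟨a, rfl⟩ u' ⟨a', rfl⟩ x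
    set f : C₀(X, ℂ) := α a * x * α a' with hfdef
    have hfΔ : ∀ z ∉ Δ, f z = 0 := by
      intro z hz
      have : α a z = 0 := by rw [hα]; exact dif_neg hz
      simp [hfdef, this]
    have hsymm : ∀ (t : Δ), e.symm ⟨φ t, Set.mem_range_self t⟩ = t := by
      intro t
      have h1 : (⟨φ t, Set.mem_range_self t⟩ : Y) = e t := Subtype.ext (he t).symm
      rw [h1, Homeomorph.symm_apply_apply]
    -- construct the preimage function
    refine ⟨⟨⟨fun y => if h : y ∈ Y then f ((e.symm ⟨y, h⟩ : Δ) : X) else 0, ?_⟩, ?_⟩, ?_⟩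
    · -- continuity
      rw [continuous_iff_continuousAt]
      intro z
      by_cases hz : z ∈ Y
      · refine ContinuousOn.continuousAt ?_ (hYo.mem_nhds hz)
        rw [continuousOn_iff_continuous_restrict]
        have : (Y.domRestrict fun y => if h : y ∈ Y then f ((e.symm ⟨y, h⟩ : Δ) : X) else 0) =
            fun p : Y => f ((e.symm p : Δ) : X) := by
          funext p
          simp [Set.domRestrict, dif_pos p.2]
        rw [this]
        exact (map_continuous f).comp (continuous_subtype_val.comp e.symm.continuous)
      · refine ContinuousOn.continuousAt ?_ ((hYcl.isOpen_compl).mem_nhds hz)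
        exact continuousOn_const.congr fun w hw => dif_neg hw
    · -- zero at infinity
      rw [Metric.tendsto_nhds]
      intro ε hε
      rw [Filter.eventually_iff, mem_cocompact']
      have hT := f.zero_at_infty' (Metric.ball_mem_nhds 0 hε)
      rw [Filter.mem_map, mem_cocompact'] at hT
      obtain ⟨t0, ht0, hsub0⟩ := hT
      set T : Set X := ((⇑f) ⁻¹' Metric.ball 0 ε)ᶜ with hTdef
      have hTc : IsCompact T := ht0.of_isClosed_subset
        (isClosed_compl_iff.mpr (Metric.isOpen_ball.preimage (map_continuous f))) hsub0
      have hTΔ : T ⊆ Δ := by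
        intro z hz
        by_contra hzΔ
        apply hz
        simp [Set.mem_preimage, Metric.mem_ball, hfΔ z hzΔ, hε]
      set S : Set Δ := Subtype.val ⁻¹' T with hSdef
      have hScpt : IsCompact S := by
        rw [Subtype.isCompact_iff]
        have : Subtype.val '' S = T := by
          rw [hSdef, Subtype.image_preimage_coe]
          exact Set.inter_eq_right.mpr hTΔ
        rw [this]; exact hTc
      refine ⟨φ '' S, hScpt.image hφc, ?_⟩
      intro y hy
      simp only [Set.mem_compl_iff, Set.mem_setOf_eq, not_lt] at hy
      by_cases h : y ∈ Y
      · have hby : (if h' : y ∈ Y then f ((e.symm ⟨y, h'⟩ : Δ) : X) else 0) =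
            f ((e.symm ⟨y, h⟩ : Δ) : X) := dif_pos h
        rw [hby] at hy
        set t : Δ := e.symm ⟨y, h⟩ with htdef
        have hyt : φ t = y := by
          have h2 := he t
          rw [htdef, Homeomorph.apply_symm_apply] at h2
          exact h2.symm
        refine ⟨t, ?_, hyt⟩
        rw [hSdef, Set.mem_preimage, hTdef]
        intro hmem
        rw [Set.mem_preimage, Metric.mem_ball] at hmem
        exact absurd hmem (not_lt.mpr hy)
      · rw [dif_neg h] at hy
        simp at hy
        exact absurd hy (not_le.mpr hε)
    · -- α b = f
      ext z
      rw [hα]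
      split
      · rename_i hz
        have : (⟨z, hz⟩ : Δ) = e.symm ⟨φ ⟨z, hz⟩, Set.mem_range_self _⟩ :=
          (hsymm ⟨z, hz⟩).symm
        show (if h : φ ⟨z, hz⟩ ∈ Y then f ((e.symm ⟨φ ⟨z, hz⟩, h⟩ : Δ) : X) else 0) = f z
        rw [dif_pos (Set.mem_range_self (⟨z, hz⟩ : Δ)), ← this]
      · rename_i hz
        exact (hfΔ z hz).symm
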